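/- arXiv:1406.5551 — 2 statements merged into one kernel-verified Lean document; each statement's English description precedes it below -/
import Mathlib

section
/- Let E and F be real Banach spaces, u : E → F a bounded linear operator, and 1 < p < ∞. Then u is Cohen strongly p-summing as a linear operator if and only if u is Lipschitz-Cohen strongly p-summing as a Lipschitz map, and the corresponding norms coincide: d_p(u) = d_p^L(u). -/
/-!
STATEMENT 5: for a bounded linear operator `u : E → F` between Banach spaces and
`1 < p < ∞`, `u` is Cohen strongly `p`-summing (linear sense) iff it is
Lipschitz-Cohen strongly `p`-summing (Lipschitz sense), and `d_p(u) = d_p^L(u)`.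
-/

open scoped BigOperators NNReal

noncomputable section

/-- `sup_{g ∈ B_{Y*}} (Σ_i |g(y_i)|^q)^{1/q}`. -/
def dualBallSup {Y : Type*} [NormedAddCommGroup Y] [NormedSpace ℝ Y]
    (q : ℝ) {n : ℕ} (y : Fin n → Y) : ℝ :=
  ⨆ g : {g : Y →L[ℝ] ℝ // ‖g‖ ≤ 1}, (∑ i, |g.1 (y i)| ^ q) ^ (1 / q)

/-- `u` is Cohen strongly `p`-summing with constant `C` (here `q = p*` is the conjugate
exponent): `Σ_i |⟨u(x_i), y_i*⟩| ≤ C (Σ_i ‖x_i‖^p)^{1/p} · sup_{y** ∈ B_{F**}}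
(Σ_i |y**(y_i*)|^{p*})^{1/p*}` for all finite families. -/
def CohenCond {E F : Type*} [NormedAddCommGroup E] [NormedSpace ℝ E]
    [NormedAddCommGroup F] [NormedSpace ℝ F]
    (p q : ℝ) (u : E →L[ℝ] F) (C : ℝ) : Prop :=
  ∀ (n : ℕ) (x : Fin n → E) (ys : Fin n → (F →L[ℝ] ℝ)),
    ∑ i, |ys i (u (x i))| ≤ C * (∑ i, ‖x i‖ ^ p) ^ (1 / p) * dualBallSup q ys

/-- `T` is Lipschitz-Cohen strongly `p`-summing with constant `C` (here `q = p*`):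
`Σ_i λ_i |⟨T(x_i) − T(x_i'), y_i*⟩| ≤ C (Σ_i λ_i^p d(x_i,x_i')^p)^{1/p} ·
sup_{y** ∈ B_{Y**}} (Σ_i |y**(y_i*)|^{p*})^{1/p*}` for all finite families with
`λ_i > 0`. -/
def LipCohenCond {X : Type*} [MetricSpace X] {Y : Type*} [NormedAddCommGroup Y]
    [NormedSpace ℝ Y] (p q : ℝ) (T : X → Y) (C : ℝ) : Prop :=
  ∀ (n : ℕ) (x x' : Fin n → X) (ys : Fin n → (Y →L[ℝ] ℝ)) (lam : Fin n → ℝ),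
    (∀ i, 0 < lam i) →
    ∑ i, lam i * |ys i (T (x i)) - ys i (T (x' i))| ≤
      C * (∑ i, lam i ^ p * dist (x i) (x' i) ^ p) ^ (1 / p) * dualBallSup q ys

/-- A bounded linear operator is Cohen strongly `p`-summing iff it is
Lipschitz-Cohen strongly `p`-summing, with `d_p(u) = d_p^L(u)`. -/
theorem cohen_linear_iff_lipschitz {E F : Type*}
    [NormedAddCommGroup E] [NormedSpace ℝ E] [CompleteSpace E]
    [NormedAddCommGroup F] [NormedSpace ℝ F] [CompleteSpace F]
    (p q : ℝ) (hp : 1 < p) (hpq : 1 / p + 1 / q = 1) (u : E →L[ℝ] F) :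
    ((∃ C > 0, CohenCond p q u C) ↔ (∃ C > 0, LipCohenCond p q (⇑u) C)) ∧
    sInf {C : ℝ | 0 < C ∧ CohenCond p q u C} =
      sInf {C : ℝ | 0 < C ∧ LipCohenCond p q (⇑u) C} := by
  have key : ∀ C : ℝ, CohenCond p q u C ↔ LipCohenCond p q (⇑u) C := by
    intro C
    constructor
    · intro h n x x' ys lam hlam
      have h2 := h n (fun i => lam i • (x i - x' i)) ys
      have e1 : ∀ i : Fin n, |ys i (u (lam i • (x i - x' i)))|
          = lam i * |ys i (u (x i)) - ys i (u (x' i))| := by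
        intro i
        rw [map_smul, map_smul, smul_eq_mul, abs_mul, abs_of_pos (hlam i),
          map_sub, map_sub]
      have e2 : ∀ i : Fin n, ‖lam i • (x i - x' i)‖ ^ p
          = lam i ^ p * dist (x i) (x' i) ^ p := by
        intro i
        rw [norm_smul, Real.norm_eq_abs, abs_of_pos (hlam i), dist_eq_norm,
          Real.mul_rpow (le_of_lt (hlam i)) (norm_nonneg _)]
      calc ∑ i, lam i * |ys i (u (x i)) - ys i (u (x' i))|
          = ∑ i, |ys i (u (lam i • (x i - x' i)))| := by
            exact Finset.sum_congr rfl fun i _ => (e1 i).symm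
        _ ≤ C * (∑ i, ‖lam i • (x i - x' i)‖ ^ p) ^ (1 / p) * dualBallSup q ys := h2
        _ = C * (∑ i, lam i ^ p * dist (x i) (x' i) ^ p) ^ (1 / p) * dualBallSup q ys := by
            congr 2
            exact congrArg (· ^ (1 / p)) (Finset.sum_congr rfl fun i _ => e2 i)
    · intro h n x ys
      have h2 := h n x (fun _ => 0) ys (fun _ => 1) (fun _ => one_pos)
      simp only [map_zero, sub_zero, one_mul, Real.one_rpow, dist_zero_right] at h2
      exact h2
  constructor
  · exact exists_congr fun C => and_congr_right fun _ => key C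
  · congr 1
    ext C
    exact and_congr_right fun _ => key C

end
end

section
/- Let X be a pointed metric space, Y a real Banach space, 1 < p < ∞, and let (ℱ(X), δ_X) be a Lipschitz-free space over X. Let T : X → Y be a Lipschitz map with T(0) = 0 and let T̂ : ℱ(X) → Y be its linearization. Then T is Lipschitz-Cohen strongly p-summing if and only if T̂ is Cohen strongly p-summing, and d_p^L(T) = d_p(T̂). -/
/-!
STATEMENT 8: for a Lipschitz map `T : X → Y` with `T(0) = 0` and its linearization
`T̂ : ℱ(X) → Y` on a Lipschitz-free space over `X`, `T` is Lipschitz-Cohen strongly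
`p`-summing iff `T̂` is Cohen strongly `p`-summing, and `d_p^L(T) = d_p(T̂)`.
-/

open scoped BigOperators NNReal

noncomputable section

universe u v w

/-- The (least) Lipschitz constant of a map. -/
def lipConst {α : Type*} {β : Type*} [PseudoMetricSpace α] [PseudoMetricSpace β]
    (g : α → β) : ℝ≥0 :=
  sInf {K : ℝ≥0 | LipschitzWith K g}

/-- `(F, δ)` is a Lipschitz-free space over the pointed metric space `(X, x0)`:
`δ` is an isometric embedding sending `x0` to `0` with dense linear span, and every
Lipschitz map `g : X → Z` into a Banach space with `g x0 = 0` admits a unique bounded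
linear factorization `ĝ : F → Z` through `δ`, with `‖ĝ‖ = Lip(g)`. -/
def IsFreeSpace {X : Type u} [MetricSpace X] (x0 : X) {F : Type v}
    [NormedAddCommGroup F] [NormedSpace ℝ F] [CompleteSpace F] (δ : X → F) : Prop :=
  (∀ x x' : X, dist (δ x) (δ x') = dist x x') ∧
  δ x0 = 0 ∧
  Dense (Submodule.span ℝ (Set.range δ) : Set F) ∧
  ∀ (Z : Type w) [NormedAddCommGroup Z] [NormedSpace ℝ Z] [CompleteSpace Z],
    ∀ g : X → Z, (∃ K : ℝ≥0, LipschitzWith K g) → g x0 = 0 →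
      ∃! ghat : F →L[ℝ] Z, (∀ x, ghat (δ x) = g x) ∧ ‖ghat‖ = (lipConst g : ℝ)

/-- Every element of the span of the range of `δ` admits, for every `ε > 0`, a molecular
decomposition whose weight is at most `‖m‖ + ε`. -/
theorem exists_decomp {X : Type u} [MetricSpace X] (x0 : X) {F : Type v}
    [NormedAddCommGroup F] [NormedSpace ℝ F] [CompleteSpace F] {δ : X → F}
    (hfree : IsFreeSpace.{u, v, v} x0 δ) {m : F}
    (hm : m ∈ Submodule.span ℝ (Set.range δ)) {ε : ℝ} (hε : 0 < ε) :
    ∃ (n : ℕ) (a : Fin n → ℝ) (u w : Fin n → X),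
      m = ∑ j, a j • (δ (u j) - δ (w j)) ∧
      ∑ j, |a j| * dist (u j) (w j) ≤ ‖m‖ + ε := by
  classical
  set V : Submodule ℝ F := Submodule.span ℝ (Set.range δ) with hV
  set D : F → Set ℝ := fun z => {r | ∃ (n : ℕ) (a : Fin n → ℝ) (u w : Fin n → X),
      z = ∑ j, a j • (δ (u j) - δ (w j)) ∧
      r = ∑ j, |a j| * dist (u j) (w j)} with hD
  have hD0 : ∀ z : F, ∀ r ∈ D z, (0:ℝ) ≤ r := by
    rintro z r ⟨n, a, u, w, -, rfl⟩
    exact Finset.sum_nonneg fun j _ => mul_nonneg (abs_nonneg _) dist_nonneg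
  have hBdd : ∀ z : F, BddBelow (D z) := fun z => ⟨0, hD0 z⟩
  have hDne : ∀ z : F, z ∈ V → (D z).Nonempty := by
    intro z hz
    obtain ⟨n, a, g, hsum⟩ := Submodule.mem_span_set'.1 hz
    choose u hu using fun i => (g i).2
    refine ⟨∑ j, |a j| * dist (u j) x0, n, a, u, fun _ => x0, ?_, rfl⟩
    rw [← hsum]
    refine Finset.sum_congr rfl fun j _ => ?_
    rw [hfree.2.1, sub_zero, hu]
  set N : V → ℝ := fun z => sInf (D (z : F)) with hN
  have hN0 : ∀ z, 0 ≤ N z := fun z => Real.sInf_nonneg (hD0 _)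
  -- scaling inequality
  have hsc : ∀ c : ℝ, 0 < c → ∀ z : V, N (c • z) ≤ c * N z := by
    intro c hc z
    rw [← div_le_iff₀' hc]
    refine le_csInf (hDne _ z.2) ?_
    rintro r ⟨n, a, u, w, hzr, rfl⟩
    rw [div_le_iff₀' hc, Finset.mul_sum]
    refine csInf_le (hBdd _) ⟨n, fun j => c * a j, u, w, ?_, ?_⟩
    · push_cast [Submodule.coe_smul]
      rw [hzr, Finset.smul_sum]
      exact Finset.sum_congr rfl fun j _ => by rw [smul_smul]
    · refine Finset.sum_congr rfl fun j _ => ?_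
      rw [abs_mul, abs_of_pos hc, mul_assoc]
  have Nhom : ∀ c : ℝ, 0 < c → ∀ z : V, N (c • z) = c * N z := by
    intro c hc z
    refine le_antisymm (hsc c hc z) ?_
    have h2 := hsc c⁻¹ (by positivity) (c • z)
    rw [inv_smul_smul₀ hc.ne' z] at h2
    calc c * N z ≤ c * (c⁻¹ * N (c • z)) := by
          exact mul_le_mul_of_nonneg_left h2 hc.le
      _ = N (c • z) := by field_simp
  have Nadd : ∀ z1 z2 : V, N (z1 + z2) ≤ N z1 + N z2 := by
    intro z1 z2
    rw [← sub_le_iff_le_add']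
    refine le_csInf (hDne _ z2.2) fun r2 hr2 => ?_
    rw [sub_le_iff_le_add', ← sub_le_iff_le_add]
    refine le_csInf (hDne _ z1.2) fun r1 hr1 => ?_
    rw [sub_le_iff_le_add]
    obtain ⟨n1, a1, u1, w1, hz1, hr1'⟩ := hr1
    obtain ⟨n2, a2, u2, w2, hz2, hr2'⟩ := hr2
    refine csInf_le (hBdd _) ⟨n1 + n2, Fin.append a1 a2, Fin.append u1 u2,
      Fin.append w1 w2, ?_, ?_⟩
    · push_cast [Submodule.coe_add]
      rw [hz1, hz2, Fin.sum_univ_add]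
      simp [Fin.append_left, Fin.append_right]
    · rw [hr1', hr2', Fin.sum_univ_add]
      simp [Fin.append_left, Fin.append_right]
  -- trivial case `m = 0`
  rcases eq_or_ne m 0 with rfl | hm0
  · refine ⟨0, ![], ![], ![], by simp, ?_⟩
    simp only [Finset.univ_eq_empty, Finset.sum_empty]
    positivity
  -- Hahn–Banach extension of `t • m ↦ t * N m` dominated by `N`
  have hmV : (⟨m, hm⟩ : V) ≠ 0 := fun h => hm0 (congrArg Subtype.val h)
  set m' : V := ⟨m, hm⟩ with hm'
  set pm : V →ₗ.[ℝ] ℝ := LinearPMap.mkSpanSingleton m' (N m') hmV with hpm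
  have hf : ∀ x : pm.domain, pm x ≤ N x := by
    rintro ⟨x, hx⟩
    have hdom : pm.domain = Submodule.span ℝ {m'} := rfl
    obtain ⟨t, ht⟩ := Submodule.mem_span_singleton.1 (hdom ▸ hx)
    have hx' : (⟨x, hx⟩ : pm.domain) = t • ⟨m', Submodule.mem_span_singleton_self m'⟩ := by
      apply Subtype.ext
      simpa using ht.symm
    have hval : pm ⟨x, hx⟩ = t * N m' := by
      rw [hx', pm.map_smul, LinearPMap.mkSpanSingleton_apply, smul_eq_mul]
    rw [hval]
    have hxt : x = t • m' := ht.symm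
    rcases lt_trichotomy t 0 with h | h | h
    · exact le_trans (mul_nonpos_of_nonpos_of_nonneg h.le (hN0 m')) (hN0 x)
    · simp only [h, zero_mul]
      exact hN0 _
    · exact ((Nhom t h m').symm.trans (congrArg N hxt.symm)).le
  obtain ⟨g, hg1, hg2⟩ := exists_extension_of_le_sublinear pm N Nhom Nadd hf
  have hgm : g m' = N m' := by
    have := hg1 ⟨m', Submodule.mem_span_singleton_self m'⟩
    rw [this, LinearPMap.mkSpanSingleton_apply]
  -- the induced Lipschitz function on `X`
  have hδV : ∀ x : X, δ x ∈ V := fun x => Submodule.subset_span (Set.mem_range_self x)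
  set f : X → ℝ := fun x => g ⟨δ x, hδV x⟩ with hfdef
  have hNd : ∀ a b : X, N ⟨δ a - δ b, sub_mem (hδV a) (hδV b)⟩ ≤ dist a b := by
    intro a b
    refine csInf_le (hBdd _) ⟨1, fun _ => 1, fun _ => a, fun _ => b, ?_, ?_⟩
    · simp
    · simp
  have hfL : LipschitzWith 1 f := by
    refine LipschitzWith.of_dist_le_mul fun a b => ?_
    rw [Real.dist_eq, NNReal.coe_one, one_mul]
    have hsub : (⟨δ a, hδV a⟩ : V) - ⟨δ b, hδV b⟩ = ⟨δ a - δ b, sub_mem (hδV a) (hδV b)⟩ := rfl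
    have h1 : f a - f b = g ⟨δ a - δ b, sub_mem (hδV a) (hδV b)⟩ := by
      rw [hfdef]; rw [← map_sub, hsub]
    rw [abs_le]
    constructor
    · have := (hg2 ⟨δ b - δ a, sub_mem (hδV b) (hδV a)⟩).trans (hNd b a)
      have hneg : (⟨δ b - δ a, sub_mem (hδV b) (hδV a)⟩ : V) =
          -⟨δ a - δ b, sub_mem (hδV a) (hδV b)⟩ := by apply Subtype.ext; simp
      rw [hneg, map_neg, dist_comm b a] at this
      linarith [h1 ▸ this]
    · have := (hg2 ⟨δ a - δ b, sub_mem (hδV a) (hδV b)⟩).trans (hNd a b)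
      linarith [h1 ▸ this]
  have hf0 : f x0 = 0 := by
    have : (⟨δ x0, hδV x0⟩ : V) = 0 := Subtype.ext (by simp [hfree.2.1])
    rw [hfdef]; simp only [this, map_zero]
  -- lift to `ULift ℝ` to apply the universal property
  set f' : X → ULift.{v} ℝ := fun x => ULift.up (f x) with hf'def
  have hupIso : Isometry (ULift.up : ℝ → ULift.{v} ℝ) := fun x1 => congrFun rfl
  have hf'L : LipschitzWith 1 f' := by
    have := hupIso.lipschitz.comp hfL
    rw [one_mul] at this; exact this
  have hf'0 : f' x0 = 0 := by
    rw [hf'def]; simp only [hf0]; rfl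
  obtain ⟨ghat, ⟨hgh1, hgh2⟩, -⟩ := hfree.2.2.2 (ULift.{v} ℝ) f' ⟨1, hf'L⟩ hf'0
  have hghn : ‖ghat‖ ≤ 1 := by
    rw [hgh2]
    have : lipConst f' ≤ 1 := csInf_le (OrderBot.bddBelow _) hf'L
    exact_mod_cast this
  -- the down continuous linear functional
  set dwn : ULift.{v} ℝ →L[ℝ] ℝ :=
    LinearMap.mkContinuous (ULift.moduleEquiv : ULift.{v} ℝ ≃ₗ[ℝ] ℝ).toLinearMap 1
      (fun x => by rw [one_mul]; exact (ULift.norm_def x).ge) with hdwn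
  set φ : F →L[ℝ] ℝ := dwn.comp ghat with hφ
  have hφn : ‖φ‖ ≤ 1 := by
    refine le_trans (ContinuousLinearMap.opNorm_comp_le _ _) ?_
    have h1 : ‖dwn‖ ≤ 1 := LinearMap.mkContinuous_norm_le _ zero_le_one _
    calc ‖dwn‖ * ‖ghat‖ ≤ 1 * 1 :=
          mul_le_mul h1 hghn (norm_nonneg _) zero_le_one
      _ = 1 := one_mul 1
  have hφδ : ∀ x : X, φ (δ x) = f x := by
    intro x
    rw [hφ]
    simp only [ContinuousLinearMap.comp_apply, hgh1 x]
    rfl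
  -- `φ` agrees with `g` on `V`
  have hφg : ∀ (z : F) (hz : z ∈ V), φ z = g ⟨z, hz⟩ := by
    intro z hz
    induction hz using Submodule.span_induction with
    | mem x h =>
        obtain ⟨x', rfl⟩ := h
        rw [hφδ x']
    | zero => exact (map_zero φ).trans (map_zero g).symm
    | add x y hx hy ihx ihy =>
        calc φ (x + y) = φ x + φ y := map_add φ x y
          _ = g ⟨x, hx⟩ + g ⟨y, hy⟩ := by rw [ihx, ihy]
          _ = g (⟨x, hx⟩ + ⟨y, hy⟩) := (map_add g _ _).symm
          _ = g ⟨x + y, add_mem hx hy⟩ := rfl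
    | smul a x hx ih =>
        calc φ (a • x) = a • φ x := map_smul φ a x
          _ = a • g ⟨x, hx⟩ := by rw [ih]
          _ = g (a • ⟨x, hx⟩) := (map_smul g a ⟨x, hx⟩).symm
          _ = g ⟨a • x, Submodule.smul_mem V a hx⟩ := rfl
  -- conclude
  have key : N m' < ‖m‖ + ε := by
    have h1 : N m' = φ m := by rw [← hgm, hφg m hm]
    have h2 : φ m ≤ ‖m‖ := by
      calc φ m ≤ |φ m| := le_abs_self _
        _ ≤ ‖φ‖ * ‖m‖ := φ.le_opNorm m
        _ ≤ 1 * ‖m‖ := mul_le_mul_of_nonneg_right hφn (norm_nonneg m)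
        _ = ‖m‖ := one_mul _
    linarith
  obtain ⟨r, hrD, hr⟩ := exists_lt_of_csInf_lt (hDne m hm) key
  obtain ⟨n, a, u, w, h1, h2⟩ := hrD
  exact ⟨n, a, u, w, h1, by linarith⟩
/-- Generic-index version of `dualBallSup`. -/
def dualBallSupI {Y : Type*} [NormedAddCommGroup Y] [NormedSpace ℝ Y]
    (q : ℝ) {ι : Type*} [Fintype ι] (y : ι → Y) : ℝ :=
  ⨆ g : {g : Y →L[ℝ] ℝ // ‖g‖ ≤ 1}, (∑ i, |g.1 (y i)| ^ q) ^ (1 / q)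

theorem dualBallSup_eq_I {Y : Type*} [NormedAddCommGroup Y] [NormedSpace ℝ Y]
    (q : ℝ) {n : ℕ} (y : Fin n → Y) : dualBallSup q y = dualBallSupI q y := rfl

theorem dualBallSupI_bddAbove {Y : Type*} [NormedAddCommGroup Y] [NormedSpace ℝ Y]
    (q : ℝ) (hq : 0 < q) {ι : Type*} [Fintype ι] (y : ι → Y) :
    BddAbove (Set.range fun g : {g : Y →L[ℝ] ℝ // ‖g‖ ≤ 1} =>
      (∑ i, |g.1 (y i)| ^ q) ^ (1 / q)) := by
  refine ⟨(∑ i, ‖y i‖ ^ q) ^ (1 / q), ?_⟩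
  rintro r ⟨g, rfl⟩
  refine Real.rpow_le_rpow (Finset.sum_nonneg fun i _ => Real.rpow_nonneg (abs_nonneg _) q)
    (Finset.sum_le_sum fun i _ => ?_) (by positivity)
  refine Real.rpow_le_rpow (abs_nonneg _) ?_ hq.le
  calc |g.1 (y i)| = ‖g.1 (y i)‖ := (Real.norm_eq_abs _).symm
    _ ≤ ‖g.1‖ * ‖y i‖ := g.1.le_opNorm _
    _ ≤ 1 * ‖y i‖ := mul_le_mul_of_nonneg_right g.2 (norm_nonneg _)
    _ = ‖y i‖ := one_mul _

theorem dualBallSupI_nonneg {Y : Type*} [NormedAddCommGroup Y] [NormedSpace ℝ Y]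
    (q : ℝ) (hq : 0 < q) {ι : Type*} [Fintype ι] (y : ι → Y) :
    0 ≤ dualBallSupI q y := by
  set g0 : {g : Y →L[ℝ] ℝ // ‖g‖ ≤ 1} := ⟨0, by simp⟩ with hg0
  have h0 : ((∑ i, |g0.1 (y i)| ^ q) ^ (1 / q) : ℝ) = 0 := by
    simp [hg0, Real.zero_rpow hq.ne', Real.zero_rpow (inv_ne_zero hq.ne'), Real.zero_rpow (by positivity : (1:ℝ)/q ≠ 0)]
  have := le_ciSup (dualBallSupI_bddAbove q hq y) g0
  rw [h0] at this
  exact this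

theorem dualBallSupI_le {Y : Type*} [NormedAddCommGroup Y] [NormedSpace ℝ Y]
    (q : ℝ) (hq : 0 < q) {ι κ : Type*} [Fintype ι] [Fintype κ] (y : ι → Y) (z : κ → Y)
    (h : ∀ g : {g : Y →L[ℝ] ℝ // ‖g‖ ≤ 1},
      ∑ i, |g.1 (y i)| ^ q ≤ ∑ j, |g.1 (z j)| ^ q) :
    dualBallSupI q y ≤ dualBallSupI q z :=
  ciSup_mono (dualBallSupI_bddAbove q hq z) fun g =>
    Real.rpow_le_rpow (Finset.sum_nonneg fun i _ => Real.rpow_nonneg (abs_nonneg _) q)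
      (h g) (by positivity)

/-- Reindexed, nonnegative-weight version of the Lipschitz-Cohen condition. -/
theorem lipCohen_general {X : Type*} [MetricSpace X] {Y : Type*} [NormedAddCommGroup Y]
    [NormedSpace ℝ Y] (p q : ℝ) (hp : 0 < p) (T : X → Y) (C : ℝ)
    (h : LipCohenCond p q T C) {ι : Type*} [Fintype ι]
    (x x' : ι → X) (ys : ι → (Y →L[ℝ] ℝ)) (lam : ι → ℝ) (hlam : ∀ i, 0 ≤ lam i) :
    ∑ i, lam i * |ys i (T (x i)) - ys i (T (x' i))| ≤
      C * (∑ i, lam i ^ p * dist (x i) (x' i) ^ p) ^ (1 / p) * dualBallSupI q ys := by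
  classical
  -- first: reindexed version with strictly positive weights
  have hgen : ∀ mu : ι → ℝ, (∀ i, 0 < mu i) →
      ∑ i, mu i * |ys i (T (x i)) - ys i (T (x' i))| ≤
        C * (∑ i, mu i ^ p * dist (x i) (x' i) ^ p) ^ (1 / p) * dualBallSupI q ys := by
    intro mu hmu
    set e := (Fintype.equivFin ι).symm with he
    have key := h (Fintype.card ι) (fun j => x (e j)) (fun j => x' (e j))
      (fun j => ys (e j)) (fun j => mu (e j)) (fun j => hmu _)
    rw [dualBallSup_eq_I] at key
    have h1 : ∑ j, mu (e j) * |ys (e j) (T (x (e j))) - ys (e j) (T (x' (e j)))| =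
        ∑ i, mu i * |ys i (T (x i)) - ys i (T (x' i))| :=
      Fintype.sum_equiv e _ _ fun j => rfl
    have h2 : ∑ j, mu (e j) ^ p * dist (x (e j)) (x' (e j)) ^ p =
        ∑ i, mu i ^ p * dist (x i) (x' i) ^ p :=
      Fintype.sum_equiv e _ _ fun j => rfl
    have h3 : dualBallSupI q (fun j => ys (e j)) = dualBallSupI q ys := by
      refine iSup_congr fun g => ?_
      rw [Fintype.sum_equiv e (fun j => |g.1 (ys (e j))| ^ q) (fun i => |g.1 (ys i)| ^ q)
        fun j => rfl]
    rw [h1, h2, h3] at key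
    exact key
  -- now pass to the limit for nonnegative weights
  set G : ℝ → ℝ := fun ε =>
    C * (∑ i, (lam i + ε) ^ p * dist (x i) (x' i) ^ p) ^ (1 / p) * dualBallSupI q ys with hG
  have htend : Filter.Tendsto G (nhdsWithin 0 (Set.Ioi 0))
      (nhds (C * (∑ i, lam i ^ p * dist (x i) (x' i) ^ p) ^ (1 / p) * dualBallSupI q ys)) := by
    have hbase : ∀ i : ι, Filter.Tendsto (fun ε : ℝ => (lam i + ε) ^ p * dist (x i) (x' i) ^ p)
        (nhdsWithin 0 (Set.Ioi 0)) (nhds (lam i ^ p * dist (x i) (x' i) ^ p)) := by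
      intro i
      have h1 : Filter.Tendsto (fun ε : ℝ => lam i + ε) (nhdsWithin 0 (Set.Ioi 0))
          (nhds (lam i)) := by
        have h2 : Filter.Tendsto (fun ε : ℝ => lam i + ε) (nhds 0) (nhds (lam i + 0)) :=
          (continuous_const.add continuous_id).tendsto (0:ℝ)
        rw [add_zero] at h2
        exact h2.mono_left nhdsWithin_le_nhds
      exact ((h1.rpow_const (Or.inr hp.le)).mul tendsto_const_nhds)
    have hsum := tendsto_finset_sum (Finset.univ : Finset ι) (fun i _ => hbase i)
    exact (tendsto_const_nhds.mul (hsum.rpow_const (Or.inr (by positivity)))).mul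
      tendsto_const_nhds
  refine ge_of_tendsto htend ?_
  filter_upwards [self_mem_nhdsWithin] with ε hε
  have hε' : (0:ℝ) < ε := hε
  calc ∑ i, lam i * |ys i (T (x i)) - ys i (T (x' i))|
      ≤ ∑ i, (lam i + ε) * |ys i (T (x i)) - ys i (T (x' i))| :=
        Finset.sum_le_sum fun i _ => mul_le_mul_of_nonneg_right (by linarith [hlam i])
          (abs_nonneg _)
    _ ≤ G ε := hgen (fun i => lam i + ε) fun i => by show 0 < lam i + ε; linarith [hlam i]
theorem lipCohen_of_cohen {X : Type u} [MetricSpace X]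
    {Y : Type v} [NormedAddCommGroup Y] [NormedSpace ℝ Y]
    {F : Type v} [NormedAddCommGroup F] [NormedSpace ℝ F]
    (p q : ℝ) {δ : X → F} (hiso : ∀ x x' : X, dist (δ x) (δ x') = dist x x')
    (T : X → Y) (That : F →L[ℝ] Y) (hThat : ∀ x, That (δ x) = T x)
    (C : ℝ) (h : CohenCond p q That C) : LipCohenCond p q T C := by
  intro n x x' ys lam hlam
  have key := h n (fun i => lam i • (δ (x i) - δ (x' i))) ys
  have h1 : ∀ i, ys i (That (lam i • (δ (x i) - δ (x' i)))) =
      lam i * (ys i (T (x i)) - ys i (T (x' i))) := by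
    intro i
    rw [map_smul, map_sub, hThat, hThat, map_smul, map_sub, smul_eq_mul]
  have h2 : ∀ i, ‖lam i • (δ (x i) - δ (x' i))‖ ^ p =
      lam i ^ p * dist (x i) (x' i) ^ p := by
    intro i
    rw [norm_smul, Real.norm_eq_abs, abs_of_pos (hlam i), ← dist_eq_norm, hiso,
      Real.mul_rpow (hlam i).le dist_nonneg]
  calc ∑ i, lam i * |ys i (T (x i)) - ys i (T (x' i))|
      = ∑ i, |ys i (That (lam i • (δ (x i) - δ (x' i))))| := by
        refine Finset.sum_congr rfl fun i _ => ?_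
        rw [h1 i, abs_mul, abs_of_pos (hlam i)]
    _ ≤ C * (∑ i, ‖lam i • (δ (x i) - δ (x' i))‖ ^ p) ^ (1 / p) * dualBallSup q ys := key
    _ = C * (∑ i, lam i ^ p * dist (x i) (x' i) ^ p) ^ (1 / p) * dualBallSup q ys := by
        rw [Finset.sum_congr rfl fun i _ => h2 i]

theorem cohen_of_lipCohen {X : Type u} [MetricSpace X] (x0 : X)
    {Y : Type v} [NormedAddCommGroup Y] [NormedSpace ℝ Y] [CompleteSpace Y]
    {F : Type v} [NormedAddCommGroup F] [NormedSpace ℝ F] [CompleteSpace F]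
    (p q : ℝ) (hp : 1 < p) (hpq : 1 / p + 1 / q = 1)
    {δ : X → F} (hfree : IsFreeSpace.{u, v, v} x0 δ)
    (T : X → Y) (K : ℝ≥0) (hT : LipschitzWith K T)
    (That : F →L[ℝ] Y) (hThat : ∀ x, That (δ x) = T x)
    (C : ℝ) (hC : 0 < C) (h : LipCohenCond p q T C) : CohenCond p q That C := by
  classical
  have hp0 : (0:ℝ) < p := lt_trans one_pos hp
  have hq1 : 1 / p < 1 := (div_lt_one hp0).2 hp
  have hqinv : (0:ℝ) < 1 / q := by linarith
  have hq0 : (0:ℝ) < q := (one_div_pos).1 hqinv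
  intro n x ys
  rw [dualBallSup_eq_I]
  set S := dualBallSupI q ys with hSdef
  have hS : 0 ≤ S := dualBallSupI_nonneg q hq0 ys
  set B : ℝ := ∑ i, ‖ys i‖ * ‖That‖ with hBdef
  have hB : 0 ≤ B :=
    Finset.sum_nonneg fun i _ => mul_nonneg (norm_nonneg _) (norm_nonneg _)
  have main : ∀ ε : ℝ, 0 < ε → ∑ i, |ys i (That (x i))| ≤
      C * (∑ i, (‖x i‖ + 2 * ε) ^ p) ^ (1 / p) * S + ε * B := by
    intro ε hε
    -- approximate by elements of the span
    have hv : ∀ i : Fin n, ∃ vv : F,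
        vv ∈ Submodule.span ℝ (Set.range δ) ∧ ‖x i - vv‖ < ε := by
      intro i
      obtain ⟨vv, hvv⟩ := Metric.dense_iff.1 hfree.2.2.1 (x i) ε hε
      refine ⟨vv, hvv.2, ?_⟩
      have := Metric.mem_ball.1 hvv.1
      rw [← dist_eq_norm, dist_comm]
      exact this
    choose v hvmem hvlt using hv
    have hvn : ∀ i, ‖v i‖ ≤ ‖x i‖ + ε := by
      intro i
      calc ‖v i‖ = ‖x i - (x i - v i)‖ := by rw [sub_sub_cancel]
        _ ≤ ‖x i‖ + ‖x i - v i‖ := norm_sub_le _ _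
        _ ≤ ‖x i‖ + ε := by linarith [hvlt i]
    -- molecular decompositions with small weight
    have hdec := fun i => exists_decomp x0 hfree (hvmem i) hε
    choose k a u w hva hwt using hdec
    -- the weights
    set s : (Σ i : Fin n, Fin (k i)) → ℝ :=
      fun ij => |a ij.1 ij.2| * dist (u ij.1 ij.2) (w ij.1 ij.2) with hs
    have hs0 : ∀ ij, 0 ≤ s ij := fun ij => mul_nonneg (abs_nonneg _) dist_nonneg
    set Si : Fin n → ℝ := fun i => ∑ j, s ⟨i, j⟩ with hSi
    have hSi0 : ∀ i, 0 ≤ Si i := fun i => Finset.sum_nonneg fun j _ => hs0 _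
    have hSile : ∀ i, Si i ≤ ‖x i‖ + 2 * ε := by
      intro i
      calc Si i = ∑ j, |a i j| * dist (u i j) (w i j) := rfl
        _ ≤ ‖v i‖ + ε := hwt i
        _ ≤ ‖x i‖ + 2 * ε := by linarith [hvn i]
    set t : (Σ i : Fin n, Fin (k i)) → ℝ := fun ij => (s ij / Si ij.1) ^ (1 / q) with ht
    have ht0 : ∀ ij, 0 ≤ t ij :=
      fun ij => Real.rpow_nonneg (div_nonneg (hs0 ij) (hSi0 _)) _
    set lam : (Σ i : Fin n, Fin (k i)) → ℝ := fun ij =>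
      if s ij = 0 then 0 else |a ij.1 ij.2| * (Si ij.1 / s ij) ^ (1 / q) with hlamdef
    have hlam0 : ∀ ij, 0 ≤ lam ij := by
      intro ij
      rw [hlamdef]
      dsimp only
      split
      · exact le_rfl
      · exact mul_nonneg (abs_nonneg _)
          (Real.rpow_nonneg (div_nonneg (hSi0 _) (hs0 ij)) _)
    set ys' : (Σ i : Fin n, Fin (k i)) → (Y →L[ℝ] ℝ) :=
      fun ij => t ij • ys ij.1 with hys'
    -- Step A : approximation
    have stepA : ∑ i, |ys i (That (x i))| ≤ ∑ i, |ys i (That (v i))| + ε * B := by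
      have h1 : ∀ i, |ys i (That (x i))| ≤
          |ys i (That (v i))| + ‖ys i‖ * ‖That‖ * ε := by
        intro i
        have hx : That (x i) = That (v i) + That (x i - v i) := by
          rw [← map_add]
          congr 1
          abel
        have h3 : |ys i (That (x i - v i))| ≤ ‖ys i‖ * (‖That‖ * ‖x i - v i‖) := by
          calc |ys i (That (x i - v i))| = ‖ys i (That (x i - v i))‖ :=
                (Real.norm_eq_abs _).symm
            _ ≤ ‖ys i‖ * ‖That (x i - v i)‖ := (ys i).le_opNorm _
            _ ≤ ‖ys i‖ * (‖That‖ * ‖x i - v i‖) :=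
                mul_le_mul_of_nonneg_left (That.le_opNorm _) (norm_nonneg _)
        have h4 : ‖ys i‖ * (‖That‖ * ‖x i - v i‖) ≤ ‖ys i‖ * ‖That‖ * ε := by
          rw [← mul_assoc]
          exact mul_le_mul_of_nonneg_left (hvlt i).le
            (mul_nonneg (norm_nonneg _) (norm_nonneg _))
        calc |ys i (That (x i))| = |ys i (That (v i)) + ys i (That (x i - v i))| := by
              rw [hx, map_add]
          _ ≤ |ys i (That (v i))| + |ys i (That (x i - v i))| := abs_add_le _ _
          _ ≤ |ys i (That (v i))| + ‖ys i‖ * ‖That‖ * ε := by linarith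
      calc ∑ i, |ys i (That (x i))|
          ≤ ∑ i, (|ys i (That (v i))| + ‖ys i‖ * ‖That‖ * ε) :=
            Finset.sum_le_sum fun i _ => h1 i
        _ = ∑ i, |ys i (That (v i))| + ε * B := by
            rw [Finset.sum_add_distrib, hBdef, Finset.mul_sum]
            congr 1
            refine Finset.sum_congr rfl fun i _ => ?_
            ring
    -- Step B : pass to molecules
    have stepB : ∑ i, |ys i (That (v i))| ≤
        ∑ ij : (Σ i : Fin n, Fin (k i)),
          lam ij * |ys' ij (T (u ij.1 ij.2)) - ys' ij (T (w ij.1 ij.2))| := by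
      rw [← Finset.univ_sigma_univ, Finset.sum_sigma]
      refine Finset.sum_le_sum fun i _ => ?_
      have hrep : ys i (That (v i)) =
          ∑ j, a i j * (ys i (T (u i j)) - ys i (T (w i j))) := by
        rw [hva i, map_sum, map_sum]
        refine Finset.sum_congr rfl fun j _ => ?_
        rw [map_smul, map_sub, hThat, hThat, map_smul, map_sub, smul_eq_mul]
      calc |ys i (That (v i))|
          ≤ ∑ j, |a i j * (ys i (T (u i j)) - ys i (T (w i j)))| := by
            rw [hrep]
            exact Finset.abs_sum_le_sum_abs _ _
        _ ≤ ∑ j, lam ⟨i, j⟩ * |ys' ⟨i, j⟩ (T (u i j)) - ys' ⟨i, j⟩ (T (w i j))| := by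
            refine Finset.sum_le_sum fun j _ => ?_
            rw [abs_mul]
            have hyscalc : ys' ⟨i, j⟩ (T (u i j)) - ys' ⟨i, j⟩ (T (w i j)) =
                t ⟨i, j⟩ * (ys i (T (u i j)) - ys i (T (w i j))) := by
              rw [hys']
              dsimp only
              rw [ContinuousLinearMap.smul_apply, ContinuousLinearMap.smul_apply,
                smul_eq_mul, smul_eq_mul, mul_sub]
            rw [hyscalc, abs_mul, abs_of_nonneg (ht0 ⟨i, j⟩)]
            by_cases hz : s ⟨i, j⟩ = 0
            · have hlz : lam ⟨i, j⟩ = 0 := by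
                rw [hlamdef]
                dsimp only
                rw [if_pos hz]
              rw [hlz, zero_mul]
              have hD : |ys i (T (u i j)) - ys i (T (w i j))| ≤
                  ‖ys i‖ * (↑K * dist (u i j) (w i j)) := by
                calc |ys i (T (u i j)) - ys i (T (w i j))|
                    = ‖ys i (T (u i j) - T (w i j))‖ := by
                      rw [map_sub]
                      exact (Real.norm_eq_abs _).symm
                  _ ≤ ‖ys i‖ * ‖T (u i j) - T (w i j)‖ := (ys i).le_opNorm _
                  _ ≤ ‖ys i‖ * (↑K * dist (u i j) (w i j)) := by
                      refine mul_le_mul_of_nonneg_left ?_ (norm_nonneg _)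
                      rw [← dist_eq_norm]
                      exact hT.dist_le_mul _ _
              have h1 : |a i j| * |ys i (T (u i j)) - ys i (T (w i j))| ≤
                  (‖ys i‖ * ↑K) * s ⟨i, j⟩ := by
                calc |a i j| * |ys i (T (u i j)) - ys i (T (w i j))|
                    ≤ |a i j| * (‖ys i‖ * (↑K * dist (u i j) (w i j))) :=
                      mul_le_mul_of_nonneg_left hD (abs_nonneg _)
                  _ = (‖ys i‖ * ↑K) * (|a i j| * dist (u i j) (w i j)) := by ring
                  _ = (‖ys i‖ * ↑K) * s ⟨i, j⟩ := rfl
              rw [hz, mul_zero] at h1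
              exact h1
            · have hspos : 0 < s ⟨i, j⟩ := lt_of_le_of_ne (hs0 _) (Ne.symm hz)
              have hSipos : 0 < Si i := lt_of_lt_of_le hspos
                (Finset.single_le_sum (fun j' _ => hs0 ⟨i, j'⟩) (Finset.mem_univ j))
              have hlz : lam ⟨i, j⟩ = |a i j| * (Si i / s ⟨i, j⟩) ^ (1 / q) := by
                rw [hlamdef]
                dsimp only
                rw [if_neg hz]
              have hone : (Si i / s ⟨i, j⟩) ^ (1 / q) * (s ⟨i, j⟩ / Si i) ^ (1 / q) = 1 := by
                rw [← Real.mul_rpow (div_nonneg hSipos.le hspos.le)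
                  (div_nonneg hspos.le hSipos.le), div_mul_div_comm,
                  mul_comm (Si i) (s ⟨i, j⟩), div_self (by positivity), Real.one_rpow]
              rw [hlz]
              refine le_of_eq ?_
              calc |a i j| * |ys i (T (u i j)) - ys i (T (w i j))|
                  = |a i j| * ((Si i / s ⟨i, j⟩) ^ (1 / q) * (s ⟨i, j⟩ / Si i) ^ (1 / q)) *
                      |ys i (T (u i j)) - ys i (T (w i j))| := by rw [hone, mul_one]
                _ = |a i j| * (Si i / s ⟨i, j⟩) ^ (1 / q) *
                    ((s ⟨i, j⟩ / Si i) ^ (1 / q) * |ys i (T (u i j)) - ys i (T (w i j))|) := by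
                    ring
    -- Step C : the weight identity
    have stepC : ∑ ij : (Σ i : Fin n, Fin (k i)),
        lam ij ^ p * dist (u ij.1 ij.2) (w ij.1 ij.2) ^ p = ∑ i, Si i ^ p := by
      rw [← Finset.univ_sigma_univ, Finset.sum_sigma]
      refine Finset.sum_congr rfl fun i _ => ?_
      have hterm : ∀ j : Fin (k i), lam ⟨i, j⟩ ^ p * dist (u i j) (w i j) ^ p =
          s ⟨i, j⟩ * Si i ^ (p - 1) := by
        intro j
        by_cases hz : s ⟨i, j⟩ = 0
        · have hlz : lam ⟨i, j⟩ = 0 := by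
            rw [hlamdef]; dsimp only; rw [if_pos hz]
          rw [hlz, Real.zero_rpow hp0.ne', zero_mul, hz, zero_mul]
        · have hspos : 0 < s ⟨i, j⟩ := lt_of_le_of_ne (hs0 _) (Ne.symm hz)
          have hSipos : 0 < Si i := lt_of_lt_of_le hspos
            (Finset.single_le_sum (fun j' _ => hs0 ⟨i, j'⟩) (Finset.mem_univ j))
          have hlz : lam ⟨i, j⟩ = |a i j| * (Si i / s ⟨i, j⟩) ^ (1 / q) := by
            rw [hlamdef]; dsimp only; rw [if_neg hz]
          have hexp : (1 / q) * p = p - 1 := by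
            have h1q : 1 / q = 1 - 1 / p := by linarith
            rw [h1q]
            field_simp
          rw [hlz, Real.mul_rpow (abs_nonneg _)
            (Real.rpow_nonneg (div_nonneg hSipos.le hspos.le) _),
            ← Real.rpow_mul (div_nonneg hSipos.le hspos.le), hexp,
            Real.div_rpow hSipos.le hspos.le]
          have habs : |a i j| ^ p * dist (u i j) (w i j) ^ p = s ⟨i, j⟩ ^ p :=
            (Real.mul_rpow (abs_nonneg _) dist_nonneg).symm
          have hsp : s ⟨i, j⟩ ^ p / s ⟨i, j⟩ ^ (p - 1) = s ⟨i, j⟩ := by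
            rw [← Real.rpow_sub hspos]
            norm_num
          calc |a i j| ^ p * (Si i ^ (p - 1) / s ⟨i, j⟩ ^ (p - 1)) * dist (u i j) (w i j) ^ p
              = |a i j| ^ p * dist (u i j) (w i j) ^ p * Si i ^ (p - 1) / s ⟨i, j⟩ ^ (p - 1) := by
                ring
            _ = s ⟨i, j⟩ ^ p / s ⟨i, j⟩ ^ (p - 1) * Si i ^ (p - 1) := by rw [habs]; ring
            _ = s ⟨i, j⟩ * Si i ^ (p - 1) := by rw [hsp]
      rw [Finset.sum_congr rfl fun j _ => hterm j, ← Finset.sum_mul]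
      have hs' : ∑ j, s ⟨i, j⟩ = Si i := rfl
      rw [hs']
      rcases eq_or_lt_of_le (hSi0 i) with hz | hz
      · rw [← hz, zero_mul, Real.zero_rpow hp0.ne']
      · have h1 : Si i ^ p = Si i ^ ((1:ℝ) + (p - 1)) := by norm_num
        rw [h1, Real.rpow_add hz, Real.rpow_one]
    -- Step D : the dual ball sup inequality
    have stepD : dualBallSupI q ys' ≤ S := by
      rw [hSdef]
      refine dualBallSupI_le q hq0 ys' ys fun g => ?_
      rw [← Finset.univ_sigma_univ, Finset.sum_sigma]
      refine Finset.sum_le_sum fun i _ => ?_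
      have hterm : ∀ j : Fin (k i), |g.1 (ys' ⟨i, j⟩)| ^ q =
          s ⟨i, j⟩ / Si i * |g.1 (ys i)| ^ q := by
        intro j
        have h1 : g.1 (ys' ⟨i, j⟩) = t ⟨i, j⟩ * g.1 (ys i) := by
          rw [hys']
          dsimp only
          rw [map_smul, smul_eq_mul]
        have h2 : t ⟨i, j⟩ ^ q = s ⟨i, j⟩ / Si i := by
          rw [ht]
          dsimp only
          rw [← Real.rpow_mul (div_nonneg (hs0 _) (hSi0 i)), one_div_mul_cancel hq0.ne',
            Real.rpow_one]
        rw [h1, abs_mul, abs_of_nonneg (ht0 ⟨i, j⟩),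
          Real.mul_rpow (ht0 ⟨i, j⟩) (abs_nonneg _), h2]
      rw [Finset.sum_congr rfl fun j _ => hterm j, ← Finset.sum_mul, ← Finset.sum_div]
      have hs' : ∑ j, s ⟨i, j⟩ = Si i := rfl
      rw [hs']
      rcases eq_or_lt_of_le (hSi0 i) with hz | hz
      · rw [← hz, zero_div, zero_mul]
        positivity
      · rw [div_self hz.ne', one_mul]
    -- assemble
    have happ := lipCohen_general p q hp0 T C h
      (fun ij : (Σ i : Fin n, Fin (k i)) => u ij.1 ij.2)
      (fun ij => w ij.1 ij.2) ys' lam hlam0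
    have hCfac : C * (∑ ij : (Σ i : Fin n, Fin (k i)),
          lam ij ^ p * dist (u ij.1 ij.2) (w ij.1 ij.2) ^ p) ^ (1 / p) * dualBallSupI q ys'
        ≤ C * (∑ i, (‖x i‖ + 2 * ε) ^ p) ^ (1 / p) * S := by
      refine mul_le_mul ?_ stepD (dualBallSupI_nonneg q hq0 ys') ?_
      · refine mul_le_mul_of_nonneg_left ?_ hC.le
        rw [stepC]
        refine Real.rpow_le_rpow
          (Finset.sum_nonneg fun i _ => Real.rpow_nonneg (hSi0 i) _)
          (Finset.sum_le_sum fun i _ =>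
            Real.rpow_le_rpow (hSi0 i) (hSile i) hp0.le) (by positivity)
      · positivity
    calc ∑ i, |ys i (That (x i))| ≤ ∑ i, |ys i (That (v i))| + ε * B := stepA
      _ ≤ (∑ ij : (Σ i : Fin n, Fin (k i)),
            lam ij * |ys' ij (T (u ij.1 ij.2)) - ys' ij (T (w ij.1 ij.2))|) + ε * B := by
          linarith [stepB]
      _ ≤ C * (∑ ij : (Σ i : Fin n, Fin (k i)),
            lam ij ^ p * dist (u ij.1 ij.2) (w ij.1 ij.2) ^ p) ^ (1 / p) *
            dualBallSupI q ys' + ε * B := by linarith [happ]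
      _ ≤ C * (∑ i, (‖x i‖ + 2 * ε) ^ p) ^ (1 / p) * S + ε * B := by linarith [hCfac]
  -- pass to the limit ε → 0⁺
  have htend : Filter.Tendsto
      (fun ε : ℝ => C * (∑ i, (‖x i‖ + 2 * ε) ^ p) ^ (1 / p) * S + ε * B)
      (nhdsWithin 0 (Set.Ioi 0))
      (nhds (C * (∑ i, ‖x i‖ ^ p) ^ (1 / p) * S + 0 * B)) := by
    have hbase : ∀ i : Fin n, Filter.Tendsto (fun ε : ℝ => (‖x i‖ + 2 * ε) ^ p)
        (nhdsWithin 0 (Set.Ioi 0)) (nhds (‖x i‖ ^ p)) := by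
      intro i
      have h1 : Filter.Tendsto (fun ε : ℝ => ‖x i‖ + 2 * ε) (nhds 0)
          (nhds (‖x i‖ + 2 * 0)) :=
        (continuous_const.add (continuous_const.mul continuous_id)).tendsto (0:ℝ)
      rw [mul_zero, add_zero] at h1
      exact (h1.mono_left nhdsWithin_le_nhds).rpow_const (Or.inr hp0.le)
    have hsum := tendsto_finset_sum (Finset.univ : Finset (Fin n)) fun i _ => hbase i
    exact ((tendsto_const_nhds.mul (hsum.rpow_const (Or.inr (by positivity)))).mul
      tendsto_const_nhds).add (Filter.tendsto_id.mono_left nhdsWithin_le_nhds |>.mul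
      tendsto_const_nhds)
  rw [zero_mul, add_zero] at htend
  refine ge_of_tendsto htend ?_
  filter_upwards [self_mem_nhdsWithin] with ε hε
  exact main ε hε
/-- `T` is Lipschitz-Cohen strongly `p`-summing iff its linearization
`T̂` is Cohen strongly `p`-summing, and `d_p^L(T) = d_p(T̂)`. -/
theorem lipCohen_iff_linearization_cohen {X : Type u} [MetricSpace X] (x0 : X)
    {Y : Type v} [NormedAddCommGroup Y] [NormedSpace ℝ Y] [CompleteSpace Y]
    {F : Type v} [NormedAddCommGroup F] [NormedSpace ℝ F] [CompleteSpace F]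
    (p q : ℝ) (hp : 1 < p) (hpq : 1 / p + 1 / q = 1)
    (δ : X → F) (hfree : IsFreeSpace.{u, v, v} x0 δ)
    (T : X → Y) (K : ℝ≥0) (hT : LipschitzWith K T) (hT0 : T x0 = 0)
    (That : F →L[ℝ] Y) (hThat : ∀ x, That (δ x) = T x) :
    ((∃ C > 0, LipCohenCond p q T C) ↔ (∃ C > 0, CohenCond p q That C)) ∧
    sInf {C : ℝ | 0 < C ∧ LipCohenCond p q T C} =
      sInf {C : ℝ | 0 < C ∧ CohenCond p q That C} := by
  have hset : {C : ℝ | 0 < C ∧ LipCohenCond p q T C} =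
      {C : ℝ | 0 < C ∧ CohenCond p q That C} := by
    ext C
    simp only [Set.mem_setOf_eq]
    constructor
    · rintro ⟨h1, h2⟩
      exact ⟨h1, cohen_of_lipCohen x0 p q hp hpq hfree T K hT That hThat C h1 h2⟩
    · rintro ⟨h1, h2⟩
      exact ⟨h1, lipCohen_of_cohen p q hfree.1 T That hThat C h2⟩
  constructor
  · constructor
    · rintro ⟨C, h1, h2⟩
      exact ⟨C, h1, cohen_of_lipCohen x0 p q hp hpq hfree T K hT That hThat C h1 h2⟩
    · rintro ⟨C, h1, h2⟩
      exact ⟨C, h1, lipCohen_of_cohen p q hfree.1 T That hThat C h2⟩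
  · rw [hset]

end
end
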